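/- Divergence form of the linearized Monge–Ampère operator: let u : ℝⁿ → ℝ be three times continuously differentiable and w : ℝⁿ → ℝ twice continuously differentiable. Then for every x, ∑_i ∂_i ( y ↦ ∑_j cof(D²u(y))_{ij} ∂_j w(y) )(x) = ∑_{i,j} cof(D²u(x))_{ij} ∂_i ∂_j w(x); that is, div( (cof D²u) Dw ) = (cof D²u) : D²w. -/

import Mathlib

open Matrix

/-- The Hessian matrix of `u : ℝⁿ → ℝ`: `(hessian u x)_{ij} = ∂_i ∂_j u (x)`. -/
noncomputable def hessian {n : ℕ} (u : (Fin n → ℝ) → ℝ) (x : Fin n → ℝ) :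
    Matrix (Fin n) (Fin n) ℝ :=
  Matrix.of fun i j =>
    fderiv ℝ (fun y => fderiv ℝ u y (Pi.single j 1)) x (Pi.single i 1)

namespace DivCofAux

/-- The determinant as a continuous multilinear map in the rows. -/
noncomputable def detCM (n : ℕ) :
    ContinuousMultilinearMap ℝ (fun _ : Fin n => (Fin n → ℝ)) ℝ where
  toMultilinearMap :=
    (Matrix.detRowAlternating (n := Fin n) (R := ℝ)).toMultilinearMap
  cont := by
    have : Continuous fun M : Matrix (Fin n) (Fin n) ℝ => M.det := continuous_id.matrix_det
    exact this

lemma detCM_apply {n : ℕ} (M : Fin n → Fin n → ℝ) :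
    detCM n M = Matrix.det (Matrix.of M) := rfl

variable {n : ℕ} {u w : (Fin n → ℝ) → ℝ}

lemma g_contDiff (hu : ContDiff ℝ 3 u) (b : Fin n) :
    ContDiff ℝ 2 (fun z => fderiv ℝ u z (Pi.single b 1)) :=
  (hu.fderiv_right (by norm_num)).clm_apply contDiff_const

lemma entry_contDiff (hu : ContDiff ℝ 3 u) (k b : Fin n) :
    ContDiff ℝ 1 (fun y => hessian u y k b) :=
  ((g_contDiff hu b).fderiv_right (by norm_num)).clm_apply contDiff_const

/-- Symmetry of third derivatives in the two outer indices. -/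
lemma T_symm (hu : ContDiff ℝ 3 u) (x : Fin n → ℝ) (i k b : Fin n) :
    fderiv ℝ (fun y => hessian u y k b) x (Pi.single i 1)
      = fderiv ℝ (fun y => hessian u y i b) x (Pi.single k 1) := by
  have hgc : ContDiff ℝ 2 (fun z => fderiv ℝ u z (Pi.single b 1)) := g_contDiff hu b
  set g := fun z => fderiv ℝ u z (Pi.single b 1) with hgdef
  have hdg : DifferentiableAt ℝ (fderiv ℝ g) x :=
    ((hgc.fderiv_right (m := 1) (by norm_num)).differentiable (by norm_num)).differentiableAt
  have key : ∀ a c : Fin n,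
      fderiv ℝ (fun y => fderiv ℝ g y (Pi.single c 1)) x (Pi.single a 1)
        = fderiv ℝ (fderiv ℝ g) x (Pi.single a 1) (Pi.single c 1) := by
    intro a c
    rw [fderiv_clm_apply hdg (differentiableAt_const _)]
    simp
  show fderiv ℝ (fun y => fderiv ℝ g y (Pi.single k 1)) x (Pi.single i 1)
      = fderiv ℝ (fun y => fderiv ℝ g y (Pi.single i 1)) x (Pi.single k 1)
  rw [key, key, (hgc.contDiffAt.isSymmSndFDerivAt (by norm_num)).eq]

/-- Derivative of the `(i,j)` entry of the cofactor matrix of the Hessian. -/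
lemma cof_hasFDerivAt (hu : ContDiff ℝ 3 u) (x : Fin n → ℝ) (i j : Fin n) :
    HasFDerivAt (fun y => ((hessian u y).adjugate)ᵀ i j)
      (((detCM n).linearDeriv
          (Function.update (fun k => hessian u x k) i (Pi.single j 1))).comp
        (ContinuousLinearMap.pi fun k =>
          if k = i then 0 else
            ContinuousLinearMap.pi fun b => fderiv ℝ (fun y => hessian u y k b) x)) x := by
  have hΦ : HasFDerivAt
      (fun y (k : Fin n) => Function.update (fun k' => hessian u y k') i (Pi.single j 1) k)
      (ContinuousLinearMap.pi fun k =>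
        if k = i then 0 else
          ContinuousLinearMap.pi fun b => fderiv ℝ (fun y => hessian u y k b) x) x := by
    apply hasFDerivAt_pi.2
    intro k
    by_cases hk : k = i
    · subst hk
      simp only [Function.update_self, if_pos rfl]
      exact hasFDerivAt_const _ _
    · simp only [Function.update_of_ne hk, if_neg hk]
      exact hasFDerivAt_pi.2 fun b =>
        (((entry_contDiff hu k b).differentiable (by norm_num)).differentiableAt).hasFDerivAt
  have hcomp := ((detCM n).hasFDerivAt
      (x := Function.update (fun k => hessian u x k) i (Pi.single j 1))).comp x hΦ
  have key : (fun y => ((hessian u y).adjugate)ᵀ i j)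
      = fun y => detCM n
          (fun k => Function.update (fun k' => hessian u y k') i (Pi.single j 1) k) := by
    funext y
    rw [Matrix.transpose_apply, Matrix.adjugate_apply]
    rfl
  rw [key]
  exact hcomp

/-- The Piola identity: the cofactor matrix of the Hessian is divergence free. -/
lemma piola (hu : ContDiff ℝ 3 u) (x : Fin n → ℝ) (j : Fin n) :
    ∑ i, (((detCM n).linearDeriv
          (Function.update (fun k => hessian u x k) i (Pi.single j 1))).comp
        (ContinuousLinearMap.pi fun k =>
          if k = i then 0 else
            ContinuousLinearMap.pi fun b => fderiv ℝ (fun y => hessian u y k b) x))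
      (Pi.single i 1) = 0 := by
  classical
  set A : Fin n → Fin n → ℝ := fun k => hessian u x k with hA
  set d : Fin n → Fin n → ℝ := fun i k =>
    detCM n (Function.update (Function.update A i (Pi.single j 1)) k
      (if k = i then 0 else fun b => fderiv ℝ (fun y => hessian u y k b) x (Pi.single i 1)))
    with hd
  have expand : ∀ i : Fin n,
      (((detCM n).linearDeriv (Function.update A i (Pi.single j 1))).comp
        (ContinuousLinearMap.pi fun k =>
          if k = i then 0 else
            ContinuousLinearMap.pi fun b => fderiv ℝ (fun y => hessian u y k b) x))
        (Pi.single i 1) = ∑ k, d i k := by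
    intro i
    rw [ContinuousLinearMap.comp_apply, ContinuousMultilinearMap.linearDeriv_apply]
    refine Finset.sum_congr rfl fun k _ => ?_
    by_cases hk : k = i
    · subst hk
      simp [hd]
    · simp only [hd, ContinuousLinearMap.pi_apply, if_neg hk]
      rfl
  have hzero : ∀ k, d k k = 0 := by
    intro k
    simp only [hd, if_pos rfl]
    exact (detCM n).map_update_zero _ _
  have hanti : ∀ i k, d k i = - d i k := by
    intro i k
    by_cases h : k = i
    · subst h; rw [hzero]; ring
    · have hik : i ≠ k := fun hh => h hh.symm
      set v : Fin n → ℝ := fun b => fderiv ℝ (fun y => hessian u y k b) x (Pi.single i 1)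
        with hv
      have hvv : (fun b => fderiv ℝ (fun y => hessian u y i b) x (Pi.single k 1)) = v := by
        funext b; rw [hv]; exact (T_symm hu x i k b).symm
      set M1 : Fin n → Fin n → ℝ :=
        Function.update (Function.update A i (Pi.single j 1)) k v with hM1
      have e1 : d i k = detCM n M1 := by
        simp only [hd, hM1, if_neg h, hv]
      have hswap : (fun l => M1 (Equiv.swap i k l))
          = Function.update (Function.update A k (Pi.single j 1)) i
              (fun b => fderiv ℝ (fun y => hessian u y i b) x (Pi.single k 1)) := by
        funext l
        rcases eq_or_ne l i with rfl | hli
        · rw [Equiv.swap_apply_left, hM1, Function.update_self, Function.update_self]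
          exact hvv.symm
        · rcases eq_or_ne l k with rfl | hlk
          · rw [Equiv.swap_apply_right, hM1, Function.update_of_ne hik,
              Function.update_self, Function.update_of_ne h, Function.update_self]
          · rw [Equiv.swap_apply_of_ne_of_ne hli hlk, hM1,
              Function.update_of_ne hlk, Function.update_of_ne hli,
              Function.update_of_ne hli, Function.update_of_ne hlk]
      have e2 : d k i = detCM n (fun l => M1 (Equiv.swap i k l)) := by
        simp only [hd, if_neg hik]
        rw [hswap]
      rw [e1, e2]
      have := Matrix.det_permute (Equiv.swap i k) (Matrix.of M1)
      rw [detCM_apply, detCM_apply]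
      have hsign : Equiv.Perm.sign (Equiv.swap i k) = -1 := Equiv.Perm.sign_swap hik
      calc Matrix.det (Matrix.of fun l => M1 (Equiv.swap i k l))
          = ((Equiv.Perm.sign (Equiv.swap i k) : ℤ) : ℝ) * Matrix.det (Matrix.of M1) := by
            exact this
        _ = - Matrix.det (Matrix.of M1) := by rw [hsign]; push_cast; ring
  have hsum : ∑ i, ∑ k, d i k = 0 := by
    have h1 : ∑ i, ∑ k, d i k = ∑ k, ∑ i, d i k := Finset.sum_comm
    have h2 : ∑ k, ∑ i, d i k = - ∑ i, ∑ k, d i k := by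
      rw [← Finset.sum_neg_distrib]
      refine Finset.sum_congr rfl fun k _ => ?_
      rw [← Finset.sum_neg_distrib]
      refine Finset.sum_congr rfl fun i _ => ?_
      rw [hanti k i]
    linarith [h1.trans h2]
  calc ∑ i, (((detCM n).linearDeriv (Function.update A i (Pi.single j 1))).comp
        (ContinuousLinearMap.pi fun k =>
          if k = i then 0 else
            ContinuousLinearMap.pi fun b => fderiv ℝ (fun y => hessian u y k b) x))
        (Pi.single i 1)
      = ∑ i, ∑ k, d i k := Finset.sum_congr rfl fun i _ => expand i
    _ = 0 := hsum

end DivCofAux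

open DivCofAux in
/-- Divergence form of the linearized Monge–Ampère operator: for `u : ℝⁿ → ℝ` of class `C³`
and `w : ℝⁿ → ℝ` of class `C²`,
`div((cof D²u) Dw) = (cof D²u) : D²w`, where `cof M = (adjugate M)ᵀ` is the cofactor matrix
and `M : N = ∑_{i,j} M_{ij} N_{ij}`. -/
theorem div_cof_hessian_grad {n : ℕ} (u w : (Fin n → ℝ) → ℝ)
    (hu : ContDiff ℝ 3 u) (hw : ContDiff ℝ 2 w) (x : Fin n → ℝ) :
    ∑ i, fderiv ℝ
        (fun y => ∑ j, ((hessian u y).adjugate)ᵀ i j * fderiv ℝ w y (Pi.single j 1))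
        x (Pi.single i 1)
      = ∑ i, ∑ j, ((hessian u x).adjugate)ᵀ i j * hessian w x i j := by
  classical
  -- derivative of the gradient components of w
  have hGc : ∀ j : Fin n, ContDiff ℝ 1 (fun y => fderiv ℝ w y (Pi.single j 1)) := fun j =>
    (hw.fderiv_right (by norm_num)).clm_apply contDiff_const
  have hG : ∀ j : Fin n, HasFDerivAt (fun y => fderiv ℝ w y (Pi.single j 1))
      (fderiv ℝ (fun y => fderiv ℝ w y (Pi.single j 1)) x) x := fun j =>
    (((hGc j).differentiable (by norm_num)).differentiableAt).hasFDerivAt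
  set L : Fin n → Fin n → ((Fin n → ℝ) →L[ℝ] ℝ) := fun i j =>
    (((detCM n).linearDeriv
        (Function.update (fun k => hessian u x k) i (Pi.single j 1))).comp
      (ContinuousLinearMap.pi fun k =>
        if k = i then 0 else
          ContinuousLinearMap.pi fun b => fderiv ℝ (fun y => hessian u y k b) x)) with hL
  have hF : ∀ i : Fin n, HasFDerivAt
      (fun y => ∑ j, ((hessian u y).adjugate)ᵀ i j * fderiv ℝ w y (Pi.single j 1))
      (∑ j, (((hessian u x).adjugate)ᵀ i j •
          fderiv ℝ (fun y => fderiv ℝ w y (Pi.single j 1)) x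
        + (fderiv ℝ w x (Pi.single j 1)) • L i j)) x := by
    intro i
    exact HasFDerivAt.fun_sum fun j _ => (cof_hasFDerivAt hu x i j).mul (hG j)
  have hfd : ∀ i : Fin n, fderiv ℝ
      (fun y => ∑ j, ((hessian u y).adjugate)ᵀ i j * fderiv ℝ w y (Pi.single j 1)) x
      (Pi.single i 1)
      = ∑ j, (((hessian u x).adjugate)ᵀ i j * hessian w x i j
          + (fderiv ℝ w x (Pi.single j 1)) * L i j (Pi.single i 1)) := by
    intro i
    rw [(hF i).fderiv]
    rw [ContinuousLinearMap.sum_apply]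
    refine Finset.sum_congr rfl fun j _ => ?_
    rw [ContinuousLinearMap.add_apply, ContinuousLinearMap.smul_apply,
      ContinuousLinearMap.smul_apply, smul_eq_mul, smul_eq_mul]
    rfl
  calc ∑ i, fderiv ℝ
        (fun y => ∑ j, ((hessian u y).adjugate)ᵀ i j * fderiv ℝ w y (Pi.single j 1))
        x (Pi.single i 1)
      = ∑ i, ∑ j, (((hessian u x).adjugate)ᵀ i j * hessian w x i j
          + (fderiv ℝ w x (Pi.single j 1)) * L i j (Pi.single i 1)) :=
        Finset.sum_congr rfl fun i _ => hfd i
    _ = ∑ i, ∑ j, ((hessian u x).adjugate)ᵀ i j * hessian w x i j := by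
        have split : ∑ i, ∑ j, (((hessian u x).adjugate)ᵀ i j * hessian w x i j
            + (fderiv ℝ w x (Pi.single j 1)) * L i j (Pi.single i 1))
            = (∑ i, ∑ j, ((hessian u x).adjugate)ᵀ i j * hessian w x i j)
              + ∑ i, ∑ j, (fderiv ℝ w x (Pi.single j 1)) * L i j (Pi.single i 1) := by
          rw [← Finset.sum_add_distrib]
          exact Finset.sum_congr rfl fun i _ => Finset.sum_add_distrib
        rw [split]
        have hz : ∑ i, ∑ j, (fderiv ℝ w x (Pi.single j 1)) * L i j (Pi.single i 1) = 0 := by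
          rw [Finset.sum_comm]
          refine Finset.sum_eq_zero fun j _ => ?_
          rw [← Finset.mul_sum]
          simp only [hL]
          rw [piola hu x j, mul_zero]
        rw [hz, add_zero]
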